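/- Let α₀ ∈ ℂ, U ⊆ ℂ open, and let (q₁, p₁, q₂, p₂) be differentiable functions on U solving the t-flow of the autonomous system (A1): q₁' = q₁² + p₂, p₁' = −2 q₁ p₁ − 3α₀, q₂' = −(1/2) p₂² + p₁, p₂' = q₂. Then u := −q₁ is four times complex differentiable on U and satisfies the autonomous fourth-order equation u'''' = 5 u² u'' − u⁵ + 5 u (u')² − 5 u' u'' + 3α₀ on U. -/

import Mathlib

/-- `(q₁,p₁,q₂,p₂)` solves the `t`-flow of the autonomous system (A1) with
parameter `α₀` on `U`: `q₁' = q₁² + p₂`, `p₁' = -2q₁p₁ - 3α₀`,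
`q₂' = -(1/2)p₂² + p₁`, `p₂' = q₂`. -/
def SolvesA1 (a0 : ℂ) (U : Set ℂ) (q1 p1 q2 p2 : ℂ → ℂ) : Prop :=
  ∀ t ∈ U,
    HasDerivAt q1 (q1 t ^ 2 + p2 t) t ∧
    HasDerivAt p1 (-2 * q1 t * p1 t - 3 * a0) t ∧
    HasDerivAt q2 (-(1/2) * p2 t ^ 2 + p1 t) t ∧
    HasDerivAt p2 (q2 t) t

/-- If `(q₁,p₁,q₂,p₂)` solves the `t`-flow of the autonomous
system (A1) with parameter `α₀`, then `u := -q₁` is four times complex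
differentiable and solves the autonomous fourth-order equation
`u'''' = 5u²u'' - u⁵ + 5u(u')² - 5u'u'' + 3α₀`. -/
theorem stmt18 (a0 : ℂ) (U : Set ℂ) (hU : IsOpen U)
    (q1 p1 q2 p2 : ℂ → ℂ) (h : SolvesA1 a0 U q1 p1 q2 p2) :
    ∀ t ∈ U,
      (HasDerivAt (fun s => -q1 s) (deriv (fun s => -q1 s) t) t) ∧
      (HasDerivAt (deriv (fun s => -q1 s)) (deriv (deriv (fun s => -q1 s)) t) t) ∧
      (HasDerivAt (deriv (deriv (fun s => -q1 s)))
        (deriv (deriv (deriv (fun s => -q1 s))) t) t) ∧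
      (HasDerivAt (deriv (deriv (deriv (fun s => -q1 s))))
        (deriv (deriv (deriv (deriv (fun s => -q1 s)))) t) t) ∧
      deriv (deriv (deriv (deriv (fun s => -q1 s)))) t =
        5 * (-q1 t) ^ 2 * deriv (deriv (fun s => -q1 s)) t - (-q1 t) ^ 5
          + 5 * (-q1 t) * (deriv (fun s => -q1 s) t) ^ 2
          - 5 * deriv (fun s => -q1 s) t * deriv (deriv (fun s => -q1 s)) t
          + 3 * a0 := by
  intro t ht
  set u : ℂ → ℂ := fun s => -q1 s with hu
  set f1 : ℂ → ℂ := fun s => -(q1 s ^ 2 + p2 s) with hf1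
  set f2 : ℂ → ℂ := fun s => -(2 * q1 s * (q1 s ^ 2 + p2 s) + q2 s) with hf2
  set f3 : ℂ → ℂ := fun s => -(2 * (q1 s ^ 2 + p2 s) ^ 2
      + 2 * q1 s * (2 * q1 s * (q1 s ^ 2 + p2 s) + q2 s)
      + (-(1/2) * p2 s ^ 2 + p1 s)) with hf3
  set f4 : ℂ → ℂ := fun s => -(6 * (q1 s ^ 2 + p2 s) * (2 * q1 s * (q1 s ^ 2 + p2 s) + q2 s)
      + 2 * q1 s * (2 * (q1 s ^ 2 + p2 s) ^ 2 + 2 * q1 s * (2 * q1 s * (q1 s ^ 2 + p2 s) + q2 s)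
          + (-(1/2) * p2 s ^ 2 + p1 s))
      + (-(p2 s * q2 s) + (-2 * q1 s * p1 s - 3 * a0))) with hf4
  have H0 : ∀ s ∈ U, HasDerivAt u (f1 s) s := by
    intro s hs
    have := ((h s hs).1).neg
    exact this
  have H1 : ∀ s ∈ U, HasDerivAt f1 (f2 s) s := by
    intro s hs
    obtain ⟨hq1, hp1, hq2, hp2⟩ := h s hs
    have := ((hq1.pow 2).add hp2).neg
    convert this using 1 <;> first | rfl | (simp only [Pi.add_apply, Pi.pow_apply, Pi.mul_apply, Nat.cast_ofNat]; norm_num; ring)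
  have H2 : ∀ s ∈ U, HasDerivAt f2 (f3 s) s := by
    intro s hs
    obtain ⟨hq1, hp1, hq2, hp2⟩ := h s hs
    have := (((hq1.const_mul 2).mul ((hq1.pow 2).add hp2)).add hq2).neg
    convert this using 1 <;> first | rfl | (simp only [Pi.add_apply, Pi.pow_apply, Pi.mul_apply, Nat.cast_ofNat]; norm_num; ring)
  have H3 : ∀ s ∈ U, HasDerivAt f3 (f4 s) s := by
    intro s hs
    obtain ⟨hq1, hp1, hq2, hp2⟩ := h s hs
    have hA : HasDerivAt (fun x => q1 x ^ 2 + p2 x) (2 * q1 s ^ 1 * (q1 s ^ 2 + p2 s) + q2 s) s :=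
      (hq1.pow 2).add hp2
    have hB : HasDerivAt (fun x => 2 * q1 x * (q1 x ^ 2 + p2 x) + q2 x)
        (2 * (q1 s ^ 2 + p2 s) * (q1 s ^ 2 + p2 s)
          + 2 * q1 s * (2 * q1 s ^ 1 * (q1 s ^ 2 + p2 s) + q2 s)
          + (-(1/2) * p2 s ^ 2 + p1 s)) s :=
      ((hq1.const_mul 2).mul hA).add hq2
    have hC : HasDerivAt (fun x => -(1/2) * p2 x ^ 2 + p1 x)
        (-(1/2) * (2 * p2 s ^ 1 * q2 s) + (-2 * q1 s * p1 s - 3 * a0)) s :=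
      ((hp2.pow 2).const_mul (-(1/2))).add hp1
    have := ((((hA.pow 2).const_mul 2).add ((hq1.const_mul 2).mul hB)).add hC).neg
    convert this using 1 <;> first | rfl | (simp only [Pi.add_apply, Pi.pow_apply, Pi.mul_apply, Nat.cast_ofNat]; norm_num; ring)
  have e1 : Set.EqOn (deriv u) f1 U := fun s hs => (H0 s hs).deriv
  have E1 : ∀ s ∈ U, HasDerivAt (deriv u) (f2 s) s := by
    intro s hs
    refine (H1 s hs).congr_of_eventuallyEq ?_
    filter_upwards [hU.mem_nhds hs] with x hx using e1 hx
  have e2 : Set.EqOn (deriv (deriv u)) f2 U := fun s hs => (E1 s hs).deriv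
  have E2 : ∀ s ∈ U, HasDerivAt (deriv (deriv u)) (f3 s) s := by
    intro s hs
    refine (H2 s hs).congr_of_eventuallyEq ?_
    filter_upwards [hU.mem_nhds hs] with x hx using e2 hx
  have e3 : Set.EqOn (deriv (deriv (deriv u))) f3 U := fun s hs => (E2 s hs).deriv
  have E3 : ∀ s ∈ U, HasDerivAt (deriv (deriv (deriv u))) (f4 s) s := by
    intro s hs
    refine (H3 s hs).congr_of_eventuallyEq ?_
    filter_upwards [hU.mem_nhds hs] with x hx using e3 hx
  have e4 : deriv (deriv (deriv (deriv u))) t = f4 t := (E3 t ht).deriv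
  refine ⟨e1 ht ▸ H0 t ht, e2 ht ▸ E1 t ht, e3 ht ▸ E2 t ht, e4 ▸ E3 t ht, ?_⟩
  rw [e4, e2 ht, e1 ht]
  simp only [hf1, hf2, hf4]
  ring
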